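/- Let (σ, τ) and (σ', τ') be four distinct simplices such that σ, σ' are contiguous in the filtration and τ, τ' are contiguous in the filtration, with σ paired with τ. Suppose transposing τ and τ' makes τ' paired with σ, and transposing σ and σ' makes τ paired with σ'. If, after performing both transpositions, σ' is not paired with τ', then in the doubly-transposed filtration σ is paired with τ' and σ' is paired with τ, so the original diagram point (f(σ), f(τ)) has multiplicity at least two. -/

import Mathlib

open Matrix

/-- A finite abstract simplicial complex: a finite family of nonempty finite
sets closed under taking nonempty subsets. -/
def IsComplex (K : Finset (Finset ℕ)) : Prop :=
  (∀ τ ∈ K, τ.Nonempty) ∧ ∀ τ ∈ K, ∀ σ : Finset ℕ, σ ⊆ τ → σ.Nonempty → σ ∈ K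

/-- The simplices of the complex `K`. -/
abbrev Simp (K : Finset (Finset ℕ)) := {σ : Finset ℕ // σ ∈ K}

/-- A filtration order on the simplices, given by an injective position
function compatible with the face relation. -/
def IsSimpFiltration (K : Finset (Finset ℕ)) (pos : Simp K → ℕ) : Prop :=
  Function.Injective pos ∧ ∀ σ τ : Simp K, σ.1 ⊆ τ.1 → σ ≠ τ → pos σ < pos τ

/-- The (full) boundary matrix of `K` over `ℤ/2`. -/
def bdry (K : Finset (Finset ℕ)) : Matrix (Simp K) (Simp K) (ZMod 2) :=
  fun σ τ => if σ.1 ⊆ τ.1 ∧ σ.1.card + 1 = τ.1.card then 1 else 0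

/-- `σ` is the low of column `τ` of `R` with respect to the order `pos`:
the entry `R σ τ` is nonzero and `σ` is the last such row. -/
def IsLow (K : Finset (Finset ℕ)) (pos : Simp K → ℕ)
    (R : Matrix (Simp K) (Simp K) (ZMod 2)) (τ σ : Simp K) : Prop :=
  R σ τ ≠ 0 ∧ ∀ σ' : Simp K, R σ' τ ≠ 0 → pos σ' ≤ pos σ

/-- `(σ, τ)` is a persistence pair of the filtration `pos`: in some (hence, by
pairing uniqueness, any) reduced decomposition `R = D V` of the boundary matrix,
with `V` invertible and upper-triangular with respect to `pos`, the low of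
column `τ` is `σ`. -/
def PersPair (K : Finset (Finset ℕ)) (pos : Simp K → ℕ) (σ τ : Simp K) : Prop :=
  ∃ R Vm : Matrix (Simp K) (Simp K) (ZMod 2),
    (∀ a b : Simp K, pos b < pos a → Vm a b = 0) ∧ IsUnit Vm ∧
    R = bdry K * Vm ∧
    (∀ τ₁ τ₂ s : Simp K, IsLow K pos R τ₁ s → IsLow K pos R τ₂ s → τ₁ = τ₂) ∧
    IsLow K pos R τ σ

/-- Swap the positions of `x` and `y` in the filtration order `pos`. -/
def swapPos (K : Finset (Finset ℕ)) (pos : Simp K → ℕ) (x y : Simp K) :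
    Simp K → ℕ :=
  fun s => if s = x then pos y else if s = y then pos x else pos s

namespace DTM

variable {K : Finset (Finset ℕ)}

lemma zmod2_cases (a : ZMod 2) : a = 0 ∨ a = 1 := by revert a; decide

lemma zmod2_aab (a b : ZMod 2) : a + (b + a) = b := by revert a b; decide

lemma zmod2_add_self (a : ZMod 2) : a + a = 0 := by revert a; decide

/-- low of a column vector with respect to an order `q` -/
def LowCol (q : Simp K → ℕ) (v : Simp K → ZMod 2) (u : Simp K) : Prop :=
  v u ≠ 0 ∧ ∀ s, v s ≠ 0 → q s ≤ q u

lemma isLow_iff {q : Simp K → ℕ} {M : Matrix (Simp K) (Simp K) (ZMod 2)} {c u : Simp K} :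
    IsLow K q M c u ↔ LowCol q (fun s => M s c) u := Iff.rfl

lemma lowCol_unique {q : Simp K → ℕ} (hq : Function.Injective q)
    {v : Simp K → ZMod 2} {u1 u2 : Simp K}
    (h1 : LowCol q v u1) (h2 : LowCol q v u2) : u1 = u2 :=
  hq (le_antisymm (h2.2 _ h1.1) (h1.2 _ h2.1))

lemma lowCol_exists {q : Simp K → ℕ} {v : Simp K → ZMod 2} {t : Simp K} (hv : v t ≠ 0) :
    ∃ u, LowCol q v u := by
  classical
  have hne : (Finset.univ.filter (fun s => v s ≠ 0)).Nonempty :=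
    ⟨t, by simp [hv]⟩
  obtain ⟨u, hu, hmax⟩ := Finset.exists_max_image _ q hne
  refine ⟨u, (Finset.mem_filter.1 hu).2, fun s hs => hmax s (by simp [hs])⟩

lemma lowCol_congr {q : Simp K → ℕ} {v w : Simp K → ZMod 2} (h : ∀ s, v s = w s)
    {u : Simp K} (hv : LowCol q v u) : LowCol q w u := by
  refine ⟨by rw [← h]; exact hv.1, fun s hs => hv.2 s (by rw [h]; exact hs)⟩

/-- sum of two columns keeps the larger low -/
lemma lowCol_add_of_lt {q : Simp K → ℕ} {v w : Simp K → ZMod 2} {a b : Simp K}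
    (hv : LowCol q v a) (hw : LowCol q w b) (hab : q a < q b) :
    LowCol q (fun s => v s + w s) b := by
  have hvb : v b = 0 := by
    by_contra h
    exact absurd (hv.2 b h) (by omega)
  constructor
  · simpa [hvb] using hw.1
  · intro s hs
    have hor : v s ≠ 0 ∨ w s ≠ 0 := by
      by_contra hc
      push_neg at hc
      simp [hc.1, hc.2] at hs
    rcases hor with h | h
    · exact le_trans (hv.2 s h) (le_of_lt hab)
    · exact hw.2 s h

/-- cancellation lemma: two columns with the same low `u`, added, have low `b`
provided `b` sits just below `u` and appears in exactly one of them. -/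
lemma lowCol_add_cancel {q : Simp K → ℕ} (hq : Function.Injective q)
    {v w : Simp K → ZMod 2} {u b : Simp K}
    (hv : LowCol q v u) (hw : LowCol q w u) (hvb : v b = 0) (hwb : w b ≠ 0)
    (hb : q b + 1 = q u) : LowCol q (fun s => v s + w s) b := by
  constructor
  · simpa [hvb] using hwb
  · intro s hs
    have hsu : s ≠ u := by
      intro h
      rcases zmod2_cases (v u) with h1 | h1
      · exact hv.1 h1
      rcases zmod2_cases (w u) with h2 | h2
      · exact hw.1 h2
      apply hs
      show v s + w s = 0
      rw [h, h1, h2]; decide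
    have : v s ≠ 0 ∨ w s ≠ 0 := by
      by_contra hc
      push_neg at hc
      simp [hc.1, hc.2] at hs
    have hle : q s ≤ q u := by
      rcases this with h | h
      · exact hv.2 s h
      · exact hw.2 s h
    have : q s ≠ q u := fun h => hsu (hq h)
    omega

end DTM

section Part2
namespace DTM
variable {K : Finset (Finset ℕ)}

/-- elementary column-addition matrix: adds column `c1` to column `c2` -/
def tmat (c1 c2 : Simp K) : Matrix (Simp K) (Simp K) (ZMod 2) :=
  fun a b => (if a = b then 1 else 0) + (if a = c1 ∧ b = c2 then 1 else 0)

lemma mul_tmat (M : Matrix (Simp K) (Simp K) (ZMod 2)) (c1 c2 : Simp K)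
    (a b : Simp K) :
    (M * tmat c1 c2) a b = M a b + if b = c2 then M a c1 else 0 := by
  classical
  rw [Matrix.mul_apply]
  unfold tmat
  rw [Finset.sum_congr rfl (fun k _ => mul_add (M a k) _ _)]
  rw [Finset.sum_add_distrib]
  congr 1
  · rw [Finset.sum_congr rfl (fun k _ => by
      rw [mul_ite, mul_one, mul_zero])]
    simp
  · rw [Finset.sum_congr rfl (fun k _ => by
      rw [mul_ite, mul_one, mul_zero])]
    by_cases hb : b = c2
    · subst hb; simp
    · simp [hb]

lemma tmat_mul_self {c1 c2 : Simp K} (h : c1 ≠ c2) :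
    (tmat c1 c2 : Matrix _ _ (ZMod 2)) * tmat c1 c2 = 1 := by
  classical
  ext a b
  rw [mul_tmat]
  unfold tmat
  simp only [Matrix.one_apply]
  by_cases hb : b = c2 <;> by_cases hac : a = c1 <;> by_cases hab : a = b <;>
    simp_all <;> decide

lemma tmat_unit {c1 c2 : Simp K} (h : c1 ≠ c2) :
    IsUnit (tmat c1 c2 : Matrix _ _ (ZMod 2)) :=
  ⟨⟨tmat c1 c2, tmat c1 c2, tmat_mul_self h, tmat_mul_self h⟩, rfl⟩

/-- triangularity is preserved by adding an earlier column to a later one -/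
lemma tmat_tri {q : Simp K → ℕ} {V : Matrix (Simp K) (Simp K) (ZMod 2)}
    (htri : ∀ a b, q b < q a → V a b = 0) {c1 c2 : Simp K} (hlt : q c1 < q c2) :
    ∀ a b, q b < q a → (V * tmat c1 c2) a b = 0 := by
  intro a b hab
  rw [mul_tmat]
  rw [htri a b hab]
  by_cases hb : b = c2
  · subst hb
    rw [htri a c1 (lt_trans hlt hab)]
    simp
  · simp [hb]

/-- one elementary fix step transfers all decomposition properties -/
lemma fix_step {q : Simp K → ℕ} {M W : Matrix (Simp K) (Simp K) (ZMod 2)}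
    (htri : ∀ a b, q b < q a → W a b = 0) (hU : IsUnit W) (hMW : M = bdry K * W)
    {c1 c2 : Simp K} (hne : c1 ≠ c2) (hlt : q c1 < q c2) :
    (∀ a b, q b < q a → (W * tmat c1 c2) a b = 0) ∧ IsUnit (W * tmat c1 c2) ∧
      (M * tmat c1 c2) = bdry K * (W * tmat c1 c2) ∧
      (∀ d, d ≠ c2 → ∀ a, (M * tmat c1 c2) a d = M a d) ∧
      (∀ a, (M * tmat c1 c2) a c2 = M a c2 + M a c1) := by
  refine ⟨tmat_tri htri hlt, hU.mul (tmat_unit hne), by rw [hMW, Matrix.mul_assoc],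
    fun d hd a => by rw [mul_tmat]; simp [hd], fun a => by rw [mul_tmat]; simp⟩

end DTM
end Part2

section Part3
namespace DTM
variable {K : Finset (Finset ℕ)}

lemma swapPos_eq_comp (pos : Simp K → ℕ) (x y : Simp K) :
    swapPos K pos x y = fun s => pos (Equiv.swap x y s) := by
  funext s
  unfold swapPos
  rcases eq_or_ne s x with h | h
  · simp [h, Equiv.swap_apply_left]
  rcases eq_or_ne s y with h2 | h2
  · subst h2
    simp only [h, if_false, if_pos rfl, Equiv.swap_apply_right]
    split <;> simp_all
  · simp [h, h2, Equiv.swap_apply_of_ne_of_ne h h2]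

lemma swapPos_inj {pos : Simp K → ℕ} (hpos : Function.Injective pos) (x y : Simp K) :
    Function.Injective (swapPos K pos x y) := by
  rw [swapPos_eq_comp]
  exact fun a b h => (Equiv.swap x y).injective (hpos h)

lemma swapPos_comm (pos : Simp K → ℕ) (x y : Simp K) :
    swapPos K pos x y = swapPos K pos y x := by
  rw [swapPos_eq_comp, swapPos_eq_comp, Equiv.swap_comm]

lemma swapPos_x (pos : Simp K → ℕ) (x y : Simp K) : swapPos K pos x y x = pos y := by
  simp [swapPos]

lemma swapPos_y (pos : Simp K → ℕ) {x y : Simp K} (h : x ≠ y) :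
    swapPos K pos x y y = pos x := by
  simp [swapPos, Ne.symm h]

lemma swapPos_other (pos : Simp K → ℕ) {x y s : Simp K} (h1 : s ≠ x) (h2 : s ≠ y) :
    swapPos K pos x y s = pos s := by
  simp [swapPos, h1, h2]

lemma swapPos_swapPos (pos : Simp K → ℕ) {a b c d : Simp K}
    (h1 : a ≠ c) (h2 : a ≠ d) (h3 : b ≠ c) (h4 : b ≠ d) :
    swapPos K (swapPos K pos a b) c d = swapPos K (swapPos K pos c d) a b := by
  funext s
  unfold swapPos
  rcases eq_or_ne s c with rfl | hc
  · simp [h1.symm, h2.symm, h3.symm, h4.symm, h1, h2, h3, h4]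
  rcases eq_or_ne s d with rfl | hd
  · simp [h1.symm, h2.symm, h3.symm, h4.symm, h1, h2, h3, h4, hc]
  rcases eq_or_ne s a with rfl | ha
  · simp [hc, hd, h1, h2, h3, h4]
  rcases eq_or_ne s b with rfl | hb
  · simp [hc, hd, ha, h1, h2, h3, h4]
  · simp [hc, hd, ha, hb]

/-- a diagonal entry of an invertible triangular matrix is nonzero -/
lemma diag_ne_zero {q : Simp K → ℕ} (hq : Function.Injective q)
    {V : Matrix (Simp K) (Simp K) (ZMod 2)} (htri : ∀ a b, q b < q a → V a b = 0)
    (hV : IsUnit V) (x : Simp K) : V x x ≠ 0 := by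
  classical
  intro h0
  have hbt : V.BlockTriangular q := fun a b h => htri a b h
  have hdetu : IsUnit V.det := (Matrix.isUnit_iff_isUnit_det V).1 hV
  have hdet : V.det ≠ 0 := hdetu.ne_zero
  apply hdet
  rw [hbt.det]
  apply Finset.prod_eq_zero (i := q x)
  · exact Finset.mem_image_of_mem q (Finset.mem_univ x)
  · haveI inst : Unique {a // q a = q x} :=
      ⟨⟨⟨x, rfl⟩⟩, fun a => Subtype.ext (hq a.2)⟩
    have hd : (default : {a // q a = q x}) = ⟨x, rfl⟩ := (inst.uniq ⟨x, rfl⟩).symm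
    rw [Matrix.det_unique, hd]
    simpa [Matrix.toSquareBlock_def] using h0

/-- if `pos` is a filtration and `R = bdry * V` with `V` triangular, then
entries of `R` on or below the diagonal vanish -/
lemma bdry_mul_tri_lower {pos : Simp K → ℕ} (hfil : IsSimpFiltration K pos)
    {V R : Matrix (Simp K) (Simp K) (ZMod 2)}
    (htri : ∀ a b, pos b < pos a → V a b = 0) (hRV : R = bdry K * V) :
    ∀ a b, pos b ≤ pos a → R a b = 0 := by
  intro a b hab
  rw [hRV, Matrix.mul_apply]
  apply Finset.sum_eq_zero
  intro k _
  by_cases hb : bdry K a k = 0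
  · rw [hb, zero_mul]
  have hsub : a.1 ⊆ k.1 ∧ a.1.card + 1 = k.1.card := by
    by_contra hc
    exact hb (by unfold bdry; exact if_neg hc)
  have hak : a ≠ k := by
    intro h
    rw [h] at hsub
    omega
  have h1 : pos a < pos k := hfil.2 a k hsub.1 hak
  have h2 : V k b = 0 := htri k b (by omega)
  rw [h2, mul_zero]

lemma low_lt {pos : Simp K → ℕ} (hfil : IsSimpFiltration K pos)
    {V R : Matrix (Simp K) (Simp K) (ZMod 2)}
    (htri : ∀ a b, pos b < pos a → V a b = 0) (hRV : R = bdry K * V)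
    {a b : Simp K} (h : R a b ≠ 0) : pos a < pos b := by
  by_contra hc
  exact h (bdry_mul_tri_lower hfil htri hRV a b (by omega))

end DTM
end Part3

section Part4
namespace DTM
variable {K : Finset (Finset ℕ)}

section Transfer
variable {pos : Simp K → ℕ} {x y : Simp K}

lemma lowA1 (hinj : Function.Injective pos) (hxy : x ≠ y) (hadj : pos y = pos x + 1)
    {v : Simp K → ZMod 2} {u : Simp K} (h : LowCol pos v u) (hux : u ≠ x) (huy : u ≠ y) :
    LowCol (swapPos K pos x y) v u := by
  refine ⟨h.1, fun s hs => ?_⟩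
  rw [swapPos_other pos hux huy]
  have hb := h.2 s hs
  rcases eq_or_ne s x with rfl | hsx
  · rw [swapPos_x]
    have : pos s ≠ pos u := fun hc => hux (hinj hc).symm
    omega
  rcases eq_or_ne s y with rfl | hsy
  · rw [swapPos_y pos hxy]
    omega
  · rw [swapPos_other pos hsx hsy]
    exact hb

lemma lowA2 (hinj : Function.Injective pos) (hxy : x ≠ y) (hadj : pos y = pos x + 1)
    {v : Simp K → ZMod 2} (h : LowCol pos v x) :
    LowCol (swapPos K pos x y) v x := by
  refine ⟨h.1, fun s hs => ?_⟩
  rw [swapPos_x]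
  have hb := h.2 s hs
  rcases eq_or_ne s x with rfl | hsx
  · rw [swapPos_x]
  rcases eq_or_ne s y with rfl | hsy
  · omega
  · rw [swapPos_other pos hsx hsy]
    omega

lemma lowA3 (hinj : Function.Injective pos) (hxy : x ≠ y) (hadj : pos y = pos x + 1)
    {v : Simp K → ZMod 2} (h : LowCol pos v y) (hx : v x = 0) :
    LowCol (swapPos K pos x y) v y := by
  refine ⟨h.1, fun s hs => ?_⟩
  rw [swapPos_y pos hxy]
  have hb := h.2 s hs
  rcases eq_or_ne s x with rfl | hsx
  · exact absurd hx hs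
  rcases eq_or_ne s y with rfl | hsy
  · rw [swapPos_y pos hxy]
  · rw [swapPos_other pos hsx hsy]
    have : pos s ≠ pos y := fun hc => hsy (hinj hc)
    omega

lemma lowA4 (hinj : Function.Injective pos) (hxy : x ≠ y) (hadj : pos y = pos x + 1)
    {v : Simp K → ZMod 2} (h : LowCol pos v y) (hx : v x ≠ 0) :
    LowCol (swapPos K pos x y) v x := by
  refine ⟨hx, fun s hs => ?_⟩
  rw [swapPos_x]
  have hb := h.2 s hs
  rcases eq_or_ne s x with rfl | hsx
  · rw [swapPos_x]
  rcases eq_or_ne s y with rfl | hsy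
  · rw [swapPos_y pos hxy]
    omega
  · rw [swapPos_other pos hsx hsy]
    exact hb

lemma lowB1 (hinj : Function.Injective pos) (hxy : x ≠ y) (hadj : pos y = pos x + 1)
    {v : Simp K → ZMod 2} {u : Simp K} (h : LowCol (swapPos K pos x y) v u)
    (hux : u ≠ x) (huy : u ≠ y) : LowCol pos v u := by
  refine ⟨h.1, fun s hs => ?_⟩
  have hb := h.2 s hs
  rw [swapPos_other pos hux huy] at hb
  rcases eq_or_ne s x with rfl | hsx
  · rw [swapPos_x] at hb
    omega
  rcases eq_or_ne s y with rfl | hsy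
  · rw [swapPos_y pos hxy] at hb
    have : pos u ≠ pos x := fun hc => hux (hinj hc)
    omega
  · rw [swapPos_other pos hsx hsy] at hb
    exact hb

lemma lowB2 (hinj : Function.Injective pos) (hxy : x ≠ y) (hadj : pos y = pos x + 1)
    {v : Simp K → ZMod 2} (h : LowCol (swapPos K pos x y) v x) :
    (LowCol pos v x ∧ v y = 0) ∨ (LowCol pos v y ∧ v x ≠ 0) := by
  by_cases hy : v y = 0
  · left
    refine ⟨⟨h.1, fun s hs => ?_⟩, hy⟩
    have hb := h.2 s hs
    rw [swapPos_x] at hb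
    rcases eq_or_ne s x with rfl | hsx
    · omega
    rcases eq_or_ne s y with rfl | hsy
    · exact absurd hy hs
    · rw [swapPos_other pos hsx hsy] at hb
      have : pos s ≠ pos y := fun hc => hsy (hinj hc)
      omega
  · right
    refine ⟨⟨hy, fun s hs => ?_⟩, h.1⟩
    have hb := h.2 s hs
    rw [swapPos_x] at hb
    rcases eq_or_ne s x with rfl | hsx
    · omega
    rcases eq_or_ne s y with rfl | hsy
    · omega
    · rw [swapPos_other pos hsx hsy] at hb
      omega

lemma lowB3 (hinj : Function.Injective pos) (hxy : x ≠ y) (hadj : pos y = pos x + 1)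
    {v : Simp K → ZMod 2} (h : LowCol (swapPos K pos x y) v y) :
    LowCol pos v y ∧ v x = 0 := by
  have hx : v x = 0 := by
    by_contra hc
    have hb := h.2 x hc
    rw [swapPos_x, swapPos_y pos hxy] at hb
    omega
  refine ⟨⟨h.1, fun s hs => ?_⟩, hx⟩
  have hb := h.2 s hs
  rw [swapPos_y pos hxy] at hb
  rcases eq_or_ne s x with rfl | hsx
  · exact absurd hx hs
  rcases eq_or_ne s y with rfl | hsy
  · omega
  · rw [swapPos_other pos hsx hsy] at hb
    omega

end Transfer
end DTM
end Part4

section Part5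
namespace DTM

lemma transposition_update (K : Finset (Finset ℕ)) (pos : Simp K → ℕ)
    (hfil : IsSimpFiltration K pos) (x y : Simp K) (hxy : x ≠ y)
    (hadj : pos y = pos x + 1) (s c : Simp K) (hp : PersPair K pos s c) :
    ∃ s' c', (s' = s ∨ (s = x ∧ s' = y) ∨ (s = y ∧ s' = x)) ∧
      (c' = c ∨ (c = x ∧ c' = y) ∨ (c = y ∧ c' = x)) ∧
      PersPair K (swapPos K pos x y) s' c' := by
  classical
  obtain ⟨R, V, htri, hVu, hRV, huniq, hlow⟩ := hp
  have hinj := hfil.1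
  set q' := swapPos K pos x y with hq'def
  have hinj' : Function.Injective q' := swapPos_inj hinj x y
  have hqx : q' x = pos x + 1 := by rw [hq'def, swapPos_x, hadj]
  have hqy : q' y = pos x := swapPos_y pos hxy
  have hqo : ∀ {t : Simp K}, t ≠ x → t ≠ y → q' t = pos t :=
    fun h1 h2 => swapPos_other pos h1 h2
  have hR0 : ∀ a b, pos b ≤ pos a → R a b = 0 := bdry_mul_tri_lower hfil htri hRV
  have hRlt : ∀ {a b}, R a b ≠ 0 → pos a < pos b := fun h => low_lt hfil htri hRV h
  have hlowlt : ∀ {d u : Simp K}, IsLow K pos R d u → pos u < pos d := fun h => hRlt h.1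
  have hOT : ∀ a b : Simp K, q' b < q' a → (a = x ∧ b = y) ∨ pos b < pos a := by
    intro a b h
    by_cases hax : a = x
    · by_cases hby : b = y
      · exact Or.inl ⟨hax, hby⟩
      right
      by_cases hbx : b = x
      · rw [hax, hbx] at h
        exact absurd h (lt_irrefl _)
      · rw [hax, hqx, hqo hbx hby] at h
        have h1 : pos b ≠ pos x := fun hc => hbx (hinj hc)
        rw [hax]
        omega
    by_cases hay : a = y
    · right
      rw [hay, hqy] at h
      rw [hay]
      by_cases hbx : b = x
      · rw [hbx, hqx] at h
        omega
      by_cases hby : b = y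
      · rw [hby, hqy] at h
        omega
      · rw [hqo hbx hby] at h
        omega
    · rw [hqo hax hay] at h
      right
      by_cases hbx : b = x
      · rw [hbx, hqx] at h
        rw [hbx]
        omega
      by_cases hby : b = y
      · rw [hby, hqy] at h
        rw [hby]
        have h1 : pos a ≠ pos y := fun hc => hay (hinj hc)
        omega
      · rw [hqo hbx hby] at h
        exact h
  -- Stage A : fix the triangularity of V with respect to the new order
  obtain ⟨R₁, V₁, htri₁, hVu₁, hRV₁, hpres₁, hcoly⟩ :
      ∃ R₁ V₁ : Matrix (Simp K) (Simp K) (ZMod 2),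
        (∀ a b, q' b < q' a → V₁ a b = 0) ∧ IsUnit V₁ ∧ R₁ = bdry K * V₁ ∧
        (∀ d, d ≠ y → ∀ t, R₁ t d = R t d) ∧
        ((∀ t, R₁ t y = R t y) ∨ (∀ t, R₁ t y = R t y + R t x)) := by
    by_cases hv : V x y = 0
    · refine ⟨R, V, ?_, hVu, hRV, fun d _ t => rfl, Or.inl fun t => rfl⟩
      intro a b hab
      rcases hOT a b hab with ⟨rfl, rfl⟩ | h
      · exact hv
      · exact htri a b h
    · have hVxx : V x x = 1 := by
        rcases zmod2_cases (V x x) with h | h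
        · exact absurd h (diag_ne_zero hinj htri hVu x)
        · exact h
      have hVxy : V x y = 1 := by
        rcases zmod2_cases (V x y) with h | h
        · exact absurd h hv
        · exact h
      refine ⟨R * tmat x y, V * tmat x y, ?_, hVu.mul (tmat_unit hxy),
        by rw [hRV, Matrix.mul_assoc], fun d hd t => by rw [mul_tmat]; simp [hd],
        Or.inr fun t => by rw [mul_tmat]; simp⟩
      intro a b hab
      rw [mul_tmat]
      rcases hOT a b hab with ⟨rfl, rfl⟩ | h
      · rw [if_pos rfl, hVxy, hVxx]; decide
      · rw [htri a b h]
        by_cases hb : b = y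
        · subst hb
          rw [if_pos rfl, htri a x (by omega), add_zero]
        · rw [if_neg hb, add_zero]
  have hR1yy : R₁ y y = 0 := by
    rcases hcoly with h | h
    · rw [h y, hR0 y y le_rfl]
    · rw [h y, hR0 y y le_rfl, hR0 y x (by omega), add_zero]
  -- Characterization of the new lows of R₁ in terms of the old matrix R
  have hCX : ∀ d, LowCol q' (fun t => R₁ t d) x →
      IsLow K pos R d x ∨ (IsLow K pos R d y ∧ R x d ≠ 0) := by
    intro d hd
    by_cases hdy : d = y
    · rw [hdy] at hd ⊢
      rcases hcoly with h | h
      · have hd' : LowCol q' (fun t => R t y) x := lowCol_congr (fun t => h t) hd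
        rcases lowB2 hinj hxy hadj hd' with ⟨h1, _⟩ | ⟨h1, _⟩
        · exact Or.inl h1
        · exact absurd (hlowlt (isLow_iff.mpr h1)) (lt_irrefl _)
      · have hd' : LowCol q' (fun t => R t y + R t x) x := lowCol_congr (fun t => h t) hd
        rcases lowB2 hinj hxy hadj hd' with ⟨h1, _⟩ | ⟨h1, _⟩
        · left
          constructor
          · have h2 := h1.1
            simp only [hR0 x x le_rfl, add_zero] at h2
            exact h2
          · intro t ht
            by_cases htx : R t x = 0
            · exact h1.2 t (by simp only [htx, add_zero]; exact ht)
            · exact le_of_lt (hRlt htx)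
        · exfalso
          apply h1.1
          simp only [hR0 y y le_rfl, hR0 y x (by omega : pos x ≤ pos y), add_zero]
    · have hd' : LowCol q' (fun t => R t d) x := lowCol_congr (fun t => hpres₁ d hdy t) hd
      rcases lowB2 hinj hxy hadj hd' with ⟨h1, _⟩ | ⟨h1, h2⟩
      · exact Or.inl h1
      · exact Or.inr ⟨h1, h2⟩
  have hCY : ∀ d, LowCol q' (fun t => R₁ t d) y →
      IsLow K pos R d y ∧ R x d = 0 ∧ d ≠ y := by
    intro d hd
    by_cases hdy : d = y
    · exfalso
      apply hd.1
      rw [hdy]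
      exact hR1yy
    · have hd' : LowCol q' (fun t => R t d) y := lowCol_congr (fun t => hpres₁ d hdy t) hd
      obtain ⟨h1, h2⟩ := lowB3 hinj hxy hadj hd'
      exact ⟨h1, h2, hdy⟩
  have hCG : ∀ d u, u ≠ x → u ≠ y → LowCol q' (fun t => R₁ t d) u →
      IsLow K pos R d u ∨ (d = y ∧ IsLow K pos R x u) := by
    intro d u hux huy hd
    by_cases hdy : d = y
    · rw [hdy] at hd ⊢
      rcases hcoly with h | h
      · exact Or.inl (lowB1 hinj hxy hadj (lowCol_congr (fun t => h t) hd) hux huy)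
      · have hw : LowCol pos (fun t => R t y + R t x) u :=
          lowB1 hinj hxy hadj (lowCol_congr (fun t => h t) hd) hux huy
        by_cases hvx : ∀ t, R t x = 0
        · left
          exact lowCol_congr (fun t => by rw [hvx t, add_zero]) hw
        · push_neg at hvx
          obtain ⟨t0, ht0⟩ := hvx
          obtain ⟨la, hla⟩ := lowCol_exists (q := pos) (v := fun t => R t x) ht0
          by_cases hvy : ∀ t, R t y = 0
          · right
            refine ⟨rfl, isLow_iff.mpr ?_⟩
            exact lowCol_congr (fun t => by rw [hvy t, zero_add]) hw
          · push_neg at hvy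
            obtain ⟨t1, ht1⟩ := hvy
            obtain ⟨lb, hlb⟩ := lowCol_exists (q := pos) (v := fun t => R t y) ht1
            have hab : la ≠ lb := fun h =>
              hxy (huniq x y la (isLow_iff.mpr hla) (isLow_iff.mpr (h ▸ hlb)))
            have hplapb : pos la ≠ pos lb := fun h => hab (hinj h)
            rcases lt_or_gt_of_ne hplapb with hlt | hgt
            · have hsum := lowCol_add_of_lt hla hlb hlt
              have hwlb : LowCol pos (fun t => R t y + R t x) lb :=
                lowCol_congr (fun t => add_comm _ _) hsum
              obtain rfl := lowCol_unique hinj hw hwlb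
              exact Or.inl hlb
            · have hsum := lowCol_add_of_lt hlb hla hgt
              have hwla : LowCol pos (fun t => R t y + R t x) la :=
                lowCol_congr (fun t => rfl) hsum
              obtain rfl := lowCol_unique hinj hw hwla
              exact Or.inr ⟨rfl, hla⟩
    · exact Or.inl (lowB1 hinj hxy hadj (lowCol_congr (fun t => hpres₁ d hdy t) hd) hux huy)
  -- A generic tracking helper for columns whose content is the original one
  have track_unch : ∀ (M : Matrix (Simp K) (Simp K) (ZMod 2)) (d : Simp K),
      (∀ t, M t d = R t d) → ∀ u, LowCol pos (fun t => R t d) u →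
      ∃ u', (u' = u ∨ (u = x ∧ u' = y) ∨ (u = y ∧ u' = x)) ∧
        LowCol q' (fun t => M t d) u' := by
    intro M d hcol u hu
    by_cases hux : u = x
    · rw [hux] at hu
      exact ⟨x, Or.inl hux.symm,
        lowCol_congr (fun t => (hcol t).symm) (lowA2 hinj hxy hadj hu)⟩
    by_cases huy : u = y
    · rw [huy] at hu
      by_cases hx0 : R x d = 0
      · exact ⟨y, Or.inl huy.symm,
          lowCol_congr (fun t => (hcol t).symm) (lowA3 hinj hxy hadj hu hx0)⟩
      · exact ⟨x, Or.inr (Or.inr ⟨huy, rfl⟩),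
          lowCol_congr (fun t => (hcol t).symm) (lowA4 hinj hxy hadj hu hx0)⟩
    · exact ⟨u, Or.inl rfl,
        lowCol_congr (fun t => (hcol t).symm) (lowA1 hinj hxy hadj hu hux huy)⟩
  -- Stage B : resolve a possible conflict of two columns with new low x
  obtain ⟨R₂, V₂, htri₂, hVu₂, hRV₂, hBdat⟩ :
      ∃ R₂ V₂ : Matrix (Simp K) (Simp K) (ZMod 2),
        (∀ a b, q' b < q' a → V₂ a b = 0) ∧ IsUnit V₂ ∧ R₂ = bdry K * V₂ ∧
        (((∀ d t, R₂ t d = R₁ t d) ∧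
            ∀ d1 d2, d1 ≠ d2 → IsLow K q' R₁ d1 x → IsLow K q' R₁ d2 x → False) ∨
          (∃ e1 e2 c1 c2 : Simp K, e1 ≠ e2 ∧
            IsLow K pos R e1 x ∧ IsLow K pos R e2 y ∧ R x e2 ≠ 0 ∧
            ((c1 = e1 ∧ c2 = e2) ∨ (c1 = e2 ∧ c2 = e1)) ∧ c2 ≠ x ∧ c2 ≠ y ∧
            c1 ≠ x ∧ c1 ≠ c2 ∧
            (∀ d, d ≠ c2 → ∀ t, R₂ t d = R₁ t d) ∧
            IsLow K q' R₂ c2 y ∧ IsLow K q' R₂ c1 x)) := by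
    by_cases hB : ∃ d1 d2, d1 ≠ d2 ∧ IsLow K q' R₁ d1 x ∧ IsLow K q' R₁ d2 x
    · obtain ⟨d1, d2, hne, h1, h2⟩ := hB
      have hclass : ∃ e1 e2, e1 ≠ e2 ∧ IsLow K pos R e1 x ∧
          (IsLow K pos R e2 y ∧ R x e2 ≠ 0) ∧
          IsLow K q' R₁ e1 x ∧ IsLow K q' R₁ e2 x := by
        rcases hCX d1 h1 with p1 | p1 <;> rcases hCX d2 h2 with p2 | p2
        · exact absurd (huniq d1 d2 x p1 p2) hne
        · exact ⟨d1, d2, hne, p1, p2, h1, h2⟩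
        · exact ⟨d2, d1, hne.symm, p2, p1, h2, h1⟩
        · exact absurd (huniq d1 d2 y p1.1 p2.1) hne
      obtain ⟨e1, e2, hee, he1, he2, hL1, hL2⟩ := hclass
      have he1x : e1 ≠ x := by
        intro h
        have := hlowlt he1
        rw [h] at this
        omega
      have he2x : e2 ≠ x := by
        intro h
        have h1 := hlowlt he2.1
        rw [h] at h1
        omega
      have he2y : e2 ≠ y := by
        intro h
        have h1 := hlowlt he2.1
        rw [h] at h1
        omega
      have hye1 : R₁ y e1 = 0 := by
        by_cases h : e1 = y
        · rw [h]
          exact hR1yy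
        · rw [hpres₁ e1 h]
          by_contra hc
          have := he1.2 y hc
          omega
      have hye2 : R₁ y e2 ≠ 0 := by
        rw [hpres₁ e2 he2y]
        exact he2.1.1
      have hq12 : q' e1 ≠ q' e2 := fun h => hee (hinj' h)
      have hqyx : q' y + 1 = q' x := by rw [hqx, hqy]
      rcases lt_or_gt_of_ne hq12 with hlt | hgt
      · obtain ⟨t1, t2, t3, t4, t5⟩ := fix_step htri₁ hVu₁ hRV₁ hee hlt
        refine ⟨R₁ * tmat e1 e2, V₁ * tmat e1 e2, t1, t2, t3, Or.inr
          ⟨e1, e2, e1, e2, hee, he1, he2.1, he2.2, Or.inl ⟨rfl, rfl⟩, he2x, he2y,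
            he1x, hee, t4, ?_, ?_⟩⟩
        · show LowCol q' (fun t => (R₁ * tmat e1 e2) t e2) y
          have hsum : LowCol q' (fun t => R₁ t e1 + R₁ t e2) y :=
            lowCol_add_cancel hinj' hL1 hL2 hye1 hye2 hqyx
          exact lowCol_congr (fun t => by rw [t5 t]; exact add_comm _ _) hsum
        · show LowCol q' (fun t => (R₁ * tmat e1 e2) t e1) x
          exact lowCol_congr (fun t => (t4 e1 hee t).symm) hL1
      · have hc2y : e1 ≠ y := by
          intro h
          have h1 := hlowlt he2.1
          rw [hqo he2x he2y, h, hqy] at hgt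
          omega
        obtain ⟨t1, t2, t3, t4, t5⟩ := fix_step htri₁ hVu₁ hRV₁ hee.symm hgt
        refine ⟨R₁ * tmat e2 e1, V₁ * tmat e2 e1, t1, t2, t3, Or.inr
          ⟨e1, e2, e2, e1, hee, he1, he2.1, he2.2, Or.inr ⟨rfl, rfl⟩, he1x, hc2y,
            he2x, hee.symm, t4, ?_, ?_⟩⟩
        · show LowCol q' (fun t => (R₁ * tmat e2 e1) t e1) y
          have hsum : LowCol q' (fun t => R₁ t e1 + R₁ t e2) y :=
            lowCol_add_cancel hinj' hL1 hL2 hye1 hye2 hqyx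
          exact lowCol_congr (fun t => by rw [t5 t]) hsum
        · show LowCol q' (fun t => (R₁ * tmat e2 e1) t e2) x
          exact lowCol_congr (fun t => (t4 e2 hee.symm t).symm) hL2
    · refine ⟨R₁, V₁, htri₁, hVu₁, hRV₁, Or.inl ⟨fun d t => rfl, ?_⟩⟩
      intro d1 d2 hne h1 h2
      exact hB ⟨d1, d2, hne, h1, h2⟩
  -- Stage C : resolve a possible conflict of columns x and y at some low a
  obtain ⟨R₃, V₃, htri₃, hVu₃, hRV₃, hCdat⟩ :
      ∃ R₃ V₃ : Matrix (Simp K) (Simp K) (ZMod 2),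
        (∀ a b, q' b < q' a → V₃ a b = 0) ∧ IsUnit V₃ ∧ R₃ = bdry K * V₃ ∧
        (((∀ d t, R₃ t d = R₂ t d) ∧
            ∀ u d1 d2, u ≠ x → u ≠ y → d1 ≠ d2 →
              IsLow K q' R₁ d1 u → IsLow K q' R₁ d2 u → False) ∨
          (∃ a : Simp K, IsLow K pos R x a ∧ a ≠ x ∧ a ≠ y ∧
            IsLow K q' R₃ y a ∧
            (∀ d, d ≠ x → ∀ t, R₃ t d = R₂ t d) ∧ (∀ t, R₃ t x = R t y) ∧
            ((∀ t, R t y = 0) ∨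
              (∃ b, IsLow K pos R y b ∧ b ≠ x ∧ b ≠ y ∧ a ≠ b ∧
                IsLow K q' R₃ x b)))) := by
    by_cases hC : ∃ u d1 d2, u ≠ x ∧ u ≠ y ∧ d1 ≠ d2 ∧
        IsLow K q' R₁ d1 u ∧ IsLow K q' R₁ d2 u
    · obtain ⟨u, d1, d2, hux, huy, hdd, h1, h2⟩ := hC
      have hident : IsLow K pos R x u ∧ IsLow K q' R₁ y u := by
        rcases hCG d1 u hux huy h1 with p1 | p1 <;> rcases hCG d2 u hux huy h2 with p2 | p2
        · exact absurd (huniq d1 d2 u p1 p2) hdd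
        · exact ⟨p2.2, p2.1 ▸ h2⟩
        · exact ⟨p1.2, p1.1 ▸ h1⟩
        · rw [p1.1, p2.1] at hdd
          exact absurd rfl hdd
      obtain ⟨hax, hy1⟩ := hident
      have hchg : ∀ t, R₁ t y = R t y + R t x := by
        rcases hcoly with h | h
        · exfalso
          have hold := lowB1 hinj hxy hadj (lowCol_congr (fun t => h t) hy1) hux huy
          exact hxy (huniq x y u hax hold)
        · exact h
      have hpx2 : ∀ t, R₂ t x = R₁ t x := by
        rcases hBdat with ⟨hp, _⟩ | ⟨e1, e2, c1, c2, _, _, _, _, _, hc2x, _, _, _, hp, _, _⟩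
        · exact fun t => hp x t
        · exact fun t => hp x (Ne.symm hc2x) t
      have hpy2 : ∀ t, R₂ t y = R₁ t y := by
        rcases hBdat with ⟨hp, _⟩ | ⟨e1, e2, c1, c2, _, _, _, _, _, _, hc2y, _, _, hp, _, _⟩
        · exact fun t => hp y t
        · exact fun t => hp y (Ne.symm hc2y) t
      have hyx : (y : Simp K) ≠ x := Ne.symm hxy
      have hqlt : q' y < q' x := by
        rw [hqx, hqy]
        omega
      obtain ⟨t1, t2, t3, t4, t5⟩ := fix_step htri₂ hVu₂ hRV₂ hyx hqlt
      have hcolx : ∀ t, (R₂ * tmat y x) t x = R t y := by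
        intro t
        rw [t5 t, hpx2 t, hpy2 t, hpres₁ x hxy t, hchg t]
        exact zmod2_aab _ _
      have hy3 : IsLow K q' (R₂ * tmat y x) y u := by
        show LowCol q' (fun t => (R₂ * tmat y x) t y) u
        exact lowCol_congr (fun t => ((t4 y hyx t).trans (hpy2 t)).symm) hy1
      refine ⟨R₂ * tmat y x, V₂ * tmat y x, t1, t2, t3, Or.inr
        ⟨u, hax, hux, huy, hy3, t4, hcolx, ?_⟩⟩
      by_cases hvy : ∀ t, R t y = 0
      · exact Or.inl hvy
      · push_neg at hvy
        obtain ⟨t1', ht1'⟩ := hvy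
        obtain ⟨lb, hlb⟩ := lowCol_exists (q := pos) (v := fun t => R t y) ht1'
        have hlby : lb ≠ y := by
          intro h
          have hh := hlowlt (isLow_iff.mpr hlb)
          rw [h] at hh
          omega
        have hlbx : lb ≠ x := by
          intro h
          rw [h] at hlb
          have hpax : pos u < pos x := hlowlt hax
          have hsum := lowCol_add_of_lt (isLow_iff.mp hax) hlb hpax
          have hwx : LowCol pos (fun t => R t y + R t x) x :=
            lowCol_congr (fun t => add_comm _ _) hsum
          have h2' : LowCol q' (fun t => R₁ t y) x :=
            lowCol_congr (fun t => (hchg t).symm) (lowA2 hinj hxy hadj hwx)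
          exact hux (lowCol_unique hinj' (isLow_iff.mp hy1) h2')
        have hab : u ≠ lb := fun h => hxy (huniq x y u hax (isLow_iff.mpr (h ▸ hlb)))
        have hxb : IsLow K q' (R₂ * tmat y x) x lb := by
          show LowCol q' (fun t => (R₂ * tmat y x) t x) lb
          exact lowCol_congr (fun t => (hcolx t).symm) (lowA1 hinj hxy hadj hlb hlbx hlby)
        exact Or.inr ⟨lb, hlb, hlbx, hlby, hab, hxb⟩
    · exact ⟨R₂, V₂, htri₂, hVu₂, hRV₂, Or.inl ⟨fun d t => rfl,
        fun u d1 d2 hux huy hdd h1 h2 => hC ⟨u, d1, d2, hux, huy, hdd, h1, h2⟩⟩⟩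
  -- helper: tracking for the changed column y (in the no-C-conflict situation)
  have track_chgY : (∀ u d1 d2, u ≠ x → u ≠ y → d1 ≠ d2 →
        IsLow K q' R₁ d1 u → IsLow K q' R₁ d2 u → False) →
      (∀ t, R₁ t y = R t y + R t x) → LowCol pos (fun t => R t y) s →
      ∃ u', (u' = s ∨ (s = x ∧ u' = y) ∨ (s = y ∧ u' = x)) ∧
        LowCol q' (fun t => R₁ t y) u' := by
    intro hnoC hchg hlowy
    have hsy : s ≠ y := by
      intro hh
      rw [hh] at hlowy
      exact hlowy.1 (hR0 y y le_rfl)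
    by_cases hvx : ∀ t, R t x = 0
    · obtain ⟨u', hu', hl⟩ := track_unch R₁ y
        (fun t => by rw [hchg t, hvx t, add_zero]) s hlowy
      exact ⟨u', hu', hl⟩
    · push_neg at hvx
      obtain ⟨t0, ht0⟩ := hvx
      obtain ⟨la, hla⟩ := lowCol_exists (q := pos) (v := fun t => R t x) ht0
      have hpla : pos la < pos x := hRlt hla.1
      by_cases hsx : s = x
      · rw [hsx] at hlowy
        have hsum := lowCol_add_of_lt hla hlowy hpla
        have hwx : LowCol pos (fun t => R t y + R t x) x :=
          lowCol_congr (fun t => add_comm _ _) hsum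
        exact ⟨x, Or.inl hsx.symm,
          lowCol_congr (fun t => (hchg t).symm) (lowA2 hinj hxy hadj hwx)⟩
      · have hlas : la ≠ s := fun hh =>
          hxy (huniq x y s (isLow_iff.mpr (hh ▸ hla)) (isLow_iff.mpr hlowy))
        have hpls : pos la ≠ pos s := fun hh => hlas (hinj hh)
        rcases lt_or_gt_of_ne hpls with hlt | hgt
        · have hsum := lowCol_add_of_lt hla hlowy hlt
          have hws : LowCol pos (fun t => R t y + R t x) s :=
            lowCol_congr (fun t => add_comm _ _) hsum
          exact ⟨s, Or.inl rfl,
            lowCol_congr (fun t => (hchg t).symm) (lowA1 hinj hxy hadj hws hsx hsy)⟩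
        · exfalso
          have hsum := lowCol_add_of_lt hlowy hla hgt
          have hlax : la ≠ x := fun hh => by
            rw [hh] at hpla
            exact absurd hpla (lt_irrefl _)
          have hlay : la ≠ y := by
            intro hh
            rw [hh] at hpla
            omega
          have hw1 : LowCol q' (fun t => R₁ t y) la :=
            lowCol_congr (fun t => (hchg t).symm) (lowA1 hinj hxy hadj hsum hlax hlay)
          have hw2 : LowCol q' (fun t => R₁ t x) la :=
            lowCol_congr (fun t => (hpres₁ x hxy t).symm)
              (lowA1 hinj hxy hadj hla hlax hlay)
          exact hnoC la y x hlax hlay (Ne.symm hxy) hw1 hw2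
  rcases hBdat with ⟨hpB, hnoB⟩ |
    ⟨e1, e2, c1, c2, hee, he1, he2, hre2, hc12, hc2x, hc2y, hc1x, hc1c2, hpB, hlc2, hlc1⟩ <;>
    rcases hCdat with ⟨hpC, hnoC⟩ |
      ⟨a, hax, haxx, haxy, hlowya, hpC, hcolx, hbdat⟩
  · -- combo 1 : no B-fix, no C-fix
    have hpres : ∀ d t, R₃ t d = R₁ t d := fun d t => (hpC d t).trans (hpB d t)
    have huniq₃ : ∀ τ₁ τ₂ u, IsLow K q' R₃ τ₁ u → IsLow K q' R₃ τ₂ u → τ₁ = τ₂ := by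
      intro d1 d2 u h1 h2
      have h1' : LowCol q' (fun t => R₁ t d1) u :=
        lowCol_congr (fun t => hpres d1 t) (isLow_iff.mp h1)
      have h2' : LowCol q' (fun t => R₁ t d2) u :=
        lowCol_congr (fun t => hpres d2 t) (isLow_iff.mp h2)
      by_cases hux : u = x
      · rw [hux] at h1' h2'
        by_contra hne
        exact hnoB d1 d2 hne h1' h2'
      by_cases huy : u = y
      · rw [huy] at h1' h2'
        obtain ⟨p1, -, -⟩ := hCY d1 h1'
        obtain ⟨p2, -, -⟩ := hCY d2 h2'
        exact huniq d1 d2 y p1 p2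
      · by_contra hne
        exact hnoC u d1 d2 hux huy hne h1' h2'
    by_cases hcy : c = y
    · rcases hcoly with h | h
      · obtain ⟨u', hu', hl⟩ := track_unch R₃ c
          (fun t => by rw [hpres c t, hcy, h t]) s (isLow_iff.mp hlow)
        exact ⟨u', c, hu', Or.inl rfl, R₃, V₃, htri₃, hVu₃, hRV₃, huniq₃, hl⟩
      · have hlowy : LowCol pos (fun t => R t y) s := by
          rw [← hcy]
          exact isLow_iff.mp hlow
        obtain ⟨u', hu', hl⟩ := track_chgY hnoC h hlowy
        refine ⟨u', c, hu', Or.inl rfl, R₃, V₃, htri₃, hVu₃, hRV₃, huniq₃, ?_⟩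
        show LowCol q' (fun t => R₃ t c) u'
        rw [hcy]
        exact lowCol_congr (fun t => (hpres y t).symm) hl
    · obtain ⟨u', hu', hl⟩ := track_unch R₃ c
        (fun t => by rw [hpres c t, hpres₁ c hcy t]) s (isLow_iff.mp hlow)
      exact ⟨u', c, hu', Or.inl rfl, R₃, V₃, htri₃, hVu₃, hRV₃, huniq₃, hl⟩
  · -- combo 3 : no B-fix, C-fix
    have huniq₃ : ∀ τ₁ τ₂ u, IsLow K q' R₃ τ₁ u → IsLow K q' R₃ τ₂ u → τ₁ = τ₂ := by
      have haux : ∀ d u, IsLow K q' R₃ d u →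
          (d = x ∧ ∃ b, IsLow K pos R y b ∧ b ≠ x ∧ b ≠ y ∧ a ≠ b ∧ u = b) ∨
          (d = y ∧ u = a) ∨
          (d ≠ x ∧ d ≠ y ∧ LowCol q' (fun t => R₁ t d) u) := by
        intro d u hd
        by_cases hdx : d = x
        · left
          refine ⟨hdx, ?_⟩
          rcases hbdat with hz | ⟨b, hb1, hbx, hby, hab, hxb⟩
          · exfalso
            have hne := hd.1
            rw [hdx] at hne
            exact hne (by rw [hcolx u, hz u])
          · refine ⟨b, hb1, hbx, hby, hab, ?_⟩
            rw [hdx] at hd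
            exact lowCol_unique hinj' (isLow_iff.mp hd) (isLow_iff.mp hxb)
        by_cases hdy : d = y
        · right; left
          refine ⟨hdy, ?_⟩
          rw [hdy] at hd
          exact lowCol_unique hinj' (isLow_iff.mp hd) (isLow_iff.mp hlowya)
        · right; right
          exact ⟨hdx, hdy,
            lowCol_congr (fun t => (hpC d hdx t).trans (hpB d t)) (isLow_iff.mp hd)⟩
      intro d1 d2 u h1 h2
      rcases haux d1 u h1 with ⟨hd1, b1, hb11, hb1x, hb1y, hab1, hub1⟩ | ⟨hd1, hua1⟩ |
          ⟨hd1x, hd1y, h1'⟩ <;>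
        rcases haux d2 u h2 with ⟨hd2, b2, hb21, hb2x, hb2y, hab2, hub2⟩ | ⟨hd2, hua2⟩ |
          ⟨hd2x, hd2y, h2'⟩
      · rw [hd1, hd2]
      · exact absurd (hua2.symm.trans hub1) hab1
      · exfalso
        rw [hub1] at h2'
        rcases hCG d2 b1 hb1x hb1y h2' with p | p
        · exact hd2y (huniq d2 y b1 p hb11)
        · exact hd2y p.1
      · exact absurd (hua1.symm.trans hub2) hab2
      · rw [hd1, hd2]
      · exfalso
        rw [hua1] at h2'
        rcases hCG d2 a haxx haxy h2' with p | p
        · exact hd2x (huniq d2 x a p hax)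
        · exact hd2y p.1
      · exfalso
        rw [hub2] at h1'
        rcases hCG d1 b2 hb2x hb2y h1' with p | p
        · exact hd1y (huniq d1 y b2 p hb21)
        · exact hd1y p.1
      · exfalso
        rw [hua2] at h1'
        rcases hCG d1 a haxx haxy h1' with p | p
        · exact hd1x (huniq d1 x a p hax)
        · exact hd1y p.1
      · by_cases hux : u = x
        · rw [hux] at h1' h2'
          by_contra hne
          exact hnoB d1 d2 hne h1' h2'
        by_cases huy : u = y
        · rw [huy] at h1' h2'
          obtain ⟨p1, -, -⟩ := hCY d1 h1'
          obtain ⟨p2, -, -⟩ := hCY d2 h2'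
          exact huniq d1 d2 y p1 p2
        · rcases hCG d1 u hux huy h1' with p1 | p1
          · rcases hCG d2 u hux huy h2' with p2 | p2
            · exact huniq d1 d2 u p1 p2
            · exact absurd p2.1 hd2y
          · exact absurd p1.1 hd1y
    by_cases hcx : c = x
    · have hsa : s = a :=
        lowCol_unique hinj (isLow_iff.mp (hcx ▸ hlow)) (isLow_iff.mp hax)
      exact ⟨s, y, Or.inl rfl, Or.inr (Or.inl ⟨hcx, rfl⟩), R₃, V₃, htri₃, hVu₃, hRV₃,
        huniq₃, by rw [hsa]; exact hlowya⟩
    by_cases hcy : c = y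
    · rcases hbdat with hz | ⟨b, hb1, hbx, hby, hab, hxb⟩
      · exfalso
        have h0 := hlow.1
        rw [hcy] at h0
        exact h0 (hz s)
      · have hsb : s = b :=
          lowCol_unique hinj (isLow_iff.mp (hcy ▸ hlow)) (isLow_iff.mp hb1)
        exact ⟨s, x, Or.inl rfl, Or.inr (Or.inr ⟨hcy, rfl⟩), R₃, V₃, htri₃, hVu₃, hRV₃,
          huniq₃, by rw [hsb]; exact hxb⟩
    · have hprescol : ∀ t, R₃ t c = R t c :=
        fun t => ((hpC c hcx t).trans (hpB c t)).trans (hpres₁ c hcy t)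
      obtain ⟨u', hu', hl⟩ := track_unch R₃ c hprescol s (isLow_iff.mp hlow)
      exact ⟨u', c, hu', Or.inl rfl, R₃, V₃, htri₃, hVu₃, hRV₃, huniq₃, hl⟩
  · -- combo 2 : B-fix, no C-fix
    have hl2' : IsLow K q' R₃ c2 y :=
      isLow_iff.mpr (lowCol_congr (fun t => (hpC c2 t).symm) (isLow_iff.mp hlc2))
    have fclass : ∀ d, d ≠ c2 → LowCol q' (fun t => R₁ t d) x → d = c1 := by
      intro d hdc hd
      rcases hCX d hd with p | p
      · have hde : d = e1 := huniq d e1 x p he1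
        rcases hc12 with ⟨hc1, hc2'⟩ | ⟨hc1, hc2'⟩
        · rw [hde, ← hc1]
        · exact absurd (hde.trans hc2'.symm) hdc
      · have hde : d = e2 := huniq d e2 y p.1 he2
        rcases hc12 with ⟨hc1, hc2'⟩ | ⟨hc1, hc2'⟩
        · exact absurd (hde.trans hc2'.symm) hdc
        · rw [hde, ← hc1]
    have huniq₃ : ∀ τ₁ τ₂ u, IsLow K q' R₃ τ₁ u → IsLow K q' R₃ τ₂ u → τ₁ = τ₂ := by
      have haux : ∀ d u, IsLow K q' R₃ d u →
          (d = c2 ∧ u = y) ∨ (d ≠ c2 ∧ LowCol q' (fun t => R₁ t d) u) := by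
        intro d u hd
        by_cases hdc : d = c2
        · left
          refine ⟨hdc, ?_⟩
          rw [hdc] at hd
          exact lowCol_unique hinj' (isLow_iff.mp hd) (isLow_iff.mp hl2')
        · right
          exact ⟨hdc,
            lowCol_congr (fun t => (hpC d t).trans (hpB d hdc t)) (isLow_iff.mp hd)⟩
      intro d1 d2 u h1 h2
      rcases haux d1 u h1 with ⟨hd1, hu1⟩ | ⟨hd1, h1'⟩ <;>
        rcases haux d2 u h2 with ⟨hd2, hu2⟩ | ⟨hd2, h2'⟩
      · rw [hd1, hd2]
      · exfalso
        rw [hu1] at h2'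
        obtain ⟨p2, p2x, -⟩ := hCY d2 h2'
        exact hre2 ((huniq d2 e2 y p2 he2) ▸ p2x)
      · exfalso
        rw [hu2] at h1'
        obtain ⟨p1, p1x, -⟩ := hCY d1 h1'
        exact hre2 ((huniq d1 e2 y p1 he2) ▸ p1x)
      · by_cases hux : u = x
        · rw [hux] at h1' h2'
          rw [fclass d1 hd1 h1', fclass d2 hd2 h2']
        by_cases huy : u = y
        · rw [huy] at h1' h2'
          obtain ⟨p1, -, -⟩ := hCY d1 h1'
          obtain ⟨p2, -, -⟩ := hCY d2 h2'
          exact huniq d1 d2 y p1 p2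
        · by_contra hne
          exact hnoC u d1 d2 hux huy hne h1' h2'
    by_cases hcc : c = c2
    · rcases hc12 with ⟨hc1, hc2'⟩ | ⟨hc1, hc2'⟩
      · have hse : s = y := by
          have hxx : IsLow K pos R e2 s := by
            rw [← hc2', ← hcc]
            exact hlow
          exact lowCol_unique hinj (isLow_iff.mp hxx) (isLow_iff.mp he2)
        refine ⟨y, c, Or.inl hse.symm, Or.inl rfl, R₃, V₃, htri₃, hVu₃, hRV₃, huniq₃, ?_⟩
        rw [hcc]
        exact hl2'
      · have hse : s = x := by
          have hxx : IsLow K pos R e1 s := by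
            rw [← hc2', ← hcc]
            exact hlow
          exact lowCol_unique hinj (isLow_iff.mp hxx) (isLow_iff.mp he1)
        refine ⟨y, c, Or.inr (Or.inl ⟨hse, rfl⟩), Or.inl rfl, R₃, V₃, htri₃, hVu₃, hRV₃,
          huniq₃, ?_⟩
        rw [hcc]
        exact hl2'
    · have hpres : ∀ t, R₃ t c = R₁ t c := fun t => (hpC c t).trans (hpB c hcc t)
      by_cases hcy : c = y
      · rcases hcoly with h | h
        · obtain ⟨u', hu', hl⟩ := track_unch R₃ c
            (fun t => by rw [hpres t, hcy, h t]) s (isLow_iff.mp hlow)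
          exact ⟨u', c, hu', Or.inl rfl, R₃, V₃, htri₃, hVu₃, hRV₃, huniq₃, hl⟩
        · have hlowy : LowCol pos (fun t => R t y) s := by
            rw [← hcy]
            exact isLow_iff.mp hlow
          obtain ⟨u', hu', hl⟩ := track_chgY hnoC h hlowy
          refine ⟨u', c, hu', Or.inl rfl, R₃, V₃, htri₃, hVu₃, hRV₃, huniq₃, ?_⟩
          show LowCol q' (fun t => R₃ t c) u'
          rw [hcy]
          exact lowCol_congr (fun t => by rw [← hcy, hpres t, hcy]) hl
      · obtain ⟨u', hu', hl⟩ := track_unch R₃ c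
          (fun t => by rw [hpres t, hpres₁ c hcy t]) s (isLow_iff.mp hlow)
        exact ⟨u', c, hu', Or.inl rfl, R₃, V₃, htri₃, hVu₃, hRV₃, huniq₃, hl⟩
  · -- combo 4 : B-fix and C-fix
    have hl2' : IsLow K q' R₃ c2 y :=
      isLow_iff.mpr (lowCol_congr (fun t => (hpC c2 hc2x t).symm) (isLow_iff.mp hlc2))
    have fclass : ∀ d, d ≠ c2 → LowCol q' (fun t => R₁ t d) x → d = c1 := by
      intro d hdc hd
      rcases hCX d hd with p | p
      · have hde : d = e1 := huniq d e1 x p he1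
        rcases hc12 with ⟨hc1, hc2'⟩ | ⟨hc1, hc2'⟩
        · rw [hde, ← hc1]
        · exact absurd (hde.trans hc2'.symm) hdc
      · have hde : d = e2 := huniq d e2 y p.1 he2
        rcases hc12 with ⟨hc1, hc2'⟩ | ⟨hc1, hc2'⟩
        · exact absurd (hde.trans hc2'.symm) hdc
        · rw [hde, ← hc1]
    have huniq₃ : ∀ τ₁ τ₂ u, IsLow K q' R₃ τ₁ u → IsLow K q' R₃ τ₂ u → τ₁ = τ₂ := by
      have haux : ∀ d u, IsLow K q' R₃ d u →
          (d = c2 ∧ u = y) ∨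
          (d = x ∧ ∃ b, IsLow K pos R y b ∧ b ≠ x ∧ b ≠ y ∧ a ≠ b ∧ u = b) ∨
          (d = y ∧ u = a) ∨
          (d ≠ c2 ∧ d ≠ x ∧ d ≠ y ∧ LowCol q' (fun t => R₁ t d) u) := by
        intro d u hd
        by_cases hdc : d = c2
        · left
          refine ⟨hdc, ?_⟩
          rw [hdc] at hd
          exact lowCol_unique hinj' (isLow_iff.mp hd) (isLow_iff.mp hl2')
        by_cases hdx : d = x
        · right; left
          refine ⟨hdx, ?_⟩
          rcases hbdat with hz | ⟨b, hb1, hbx, hby, hab, hxb⟩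
          · exfalso
            have hne := hd.1
            rw [hdx] at hne
            exact hne (by rw [hcolx u, hz u])
          · refine ⟨b, hb1, hbx, hby, hab, ?_⟩
            rw [hdx] at hd
            exact lowCol_unique hinj' (isLow_iff.mp hd) (isLow_iff.mp hxb)
        by_cases hdy : d = y
        · right; right; left
          refine ⟨hdy, ?_⟩
          rw [hdy] at hd
          exact lowCol_unique hinj' (isLow_iff.mp hd) (isLow_iff.mp hlowya)
        · right; right; right
          exact ⟨hdc, hdx, hdy,
            lowCol_congr (fun t => (hpC d hdx t).trans (hpB d hdc t)) (isLow_iff.mp hd)⟩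
      intro d1 d2 u h1 h2
      rcases haux d1 u h1 with ⟨hd1, hu1⟩ | ⟨hd1, b1, hb11, hb1x, hb1y, hab1, hub1⟩ |
          ⟨hd1, hua1⟩ | ⟨hd1c, hd1x, hd1y, h1'⟩ <;>
        rcases haux d2 u h2 with ⟨hd2, hu2⟩ | ⟨hd2, b2, hb21, hb2x, hb2y, hab2, hub2⟩ |
          ⟨hd2, hua2⟩ | ⟨hd2c, hd2x, hd2y, h2'⟩
      · rw [hd1, hd2]
      · exact absurd (hub2.symm.trans hu1) hb2y
      · exact absurd (hua2.symm.trans hu1) haxy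
      · exfalso
        rw [hu1] at h2'
        obtain ⟨p2, p2x, -⟩ := hCY d2 h2'
        exact hre2 ((huniq d2 e2 y p2 he2) ▸ p2x)
      · exact absurd (hub1.symm.trans hu2) hb1y
      · rw [hd1, hd2]
      · exact absurd (hua2.symm.trans hub1) hab1
      · exfalso
        rw [hub1] at h2'
        rcases hCG d2 b1 hb1x hb1y h2' with p | p
        · exact hd2y (huniq d2 y b1 p hb11)
        · exact hd2y p.1
      · exact absurd (hua1.symm.trans hu2) haxy
      · exact absurd (hua1.symm.trans hub2) hab2
      · rw [hd1, hd2]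
      · exfalso
        rw [hua1] at h2'
        rcases hCG d2 a haxx haxy h2' with p | p
        · exact hd2x (huniq d2 x a p hax)
        · exact hd2y p.1
      · exfalso
        rw [hu2] at h1'
        obtain ⟨p1, p1x, -⟩ := hCY d1 h1'
        exact hre2 ((huniq d1 e2 y p1 he2) ▸ p1x)
      · exfalso
        rw [hub2] at h1'
        rcases hCG d1 b2 hb2x hb2y h1' with p | p
        · exact hd1y (huniq d1 y b2 p hb21)
        · exact hd1y p.1
      · exfalso
        rw [hua2] at h1'
        rcases hCG d1 a haxx haxy h1' with p | p
        · exact hd1x (huniq d1 x a p hax)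
        · exact hd1y p.1
      · by_cases hux : u = x
        · rw [hux] at h1' h2'
          rw [fclass d1 hd1c h1', fclass d2 hd2c h2']
        by_cases huy : u = y
        · rw [huy] at h1' h2'
          obtain ⟨p1, -, -⟩ := hCY d1 h1'
          obtain ⟨p2, -, -⟩ := hCY d2 h2'
          exact huniq d1 d2 y p1 p2
        · rcases hCG d1 u hux huy h1' with p1 | p1
          · rcases hCG d2 u hux huy h2' with p2 | p2
            · exact huniq d1 d2 u p1 p2
            · exact absurd p2.1 hd2y
          · exact absurd p1.1 hd1y
    by_cases hcc : c = c2
    · rcases hc12 with ⟨hc1, hc2'⟩ | ⟨hc1, hc2'⟩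
      · have hse : s = y := by
          have hxx : IsLow K pos R e2 s := by
            rw [← hc2', ← hcc]
            exact hlow
          exact lowCol_unique hinj (isLow_iff.mp hxx) (isLow_iff.mp he2)
        refine ⟨y, c, Or.inl hse.symm, Or.inl rfl, R₃, V₃, htri₃, hVu₃, hRV₃, huniq₃, ?_⟩
        rw [hcc]
        exact hl2'
      · have hse : s = x := by
          have hxx : IsLow K pos R e1 s := by
            rw [← hc2', ← hcc]
            exact hlow
          exact lowCol_unique hinj (isLow_iff.mp hxx) (isLow_iff.mp he1)
        refine ⟨y, c, Or.inr (Or.inl ⟨hse, rfl⟩), Or.inl rfl, R₃, V₃, htri₃, hVu₃, hRV₃,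
          huniq₃, ?_⟩
        rw [hcc]
        exact hl2'
    by_cases hcx : c = x
    · have hsa : s = a :=
        lowCol_unique hinj (isLow_iff.mp (hcx ▸ hlow)) (isLow_iff.mp hax)
      exact ⟨s, y, Or.inl rfl, Or.inr (Or.inl ⟨hcx, rfl⟩), R₃, V₃, htri₃, hVu₃, hRV₃,
        huniq₃, by rw [hsa]; exact hlowya⟩
    by_cases hcy : c = y
    · rcases hbdat with hz | ⟨b, hb1, hbx, hby, hab, hxb⟩
      · exfalso
        have h0 := hlow.1
        rw [hcy] at h0
        exact h0 (hz s)
      · have hsb : s = b :=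
          lowCol_unique hinj (isLow_iff.mp (hcy ▸ hlow)) (isLow_iff.mp hb1)
        exact ⟨s, x, Or.inl rfl, Or.inr (Or.inr ⟨hcy, rfl⟩), R₃, V₃, htri₃, hVu₃, hRV₃,
          huniq₃, by rw [hsb]; exact hxb⟩
    · have hprescol : ∀ t, R₃ t c = R t c :=
        fun t => ((hpC c hcx t).trans (hpB c hcc t)).trans (hpres₁ c hcy t)
      obtain ⟨u', hu', hl⟩ := track_unch R₃ c hprescol s (isLow_iff.mp hlow)
      exact ⟨u', c, hu', Or.inl rfl, R₃, V₃, htri₃, hVu₃, hRV₃, huniq₃, hl⟩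

end DTM
end Part5

/-- Case analysis in the consistency-of-critical-sets proof: given contiguous
pairs `σ, σ'` and `τ, τ'` with `σ` paired with `τ`, such that transposing
`τ, τ'` pairs `σ` with `τ'` and transposing `σ, σ'` pairs `σ'` with `τ`, if
after both transpositions `σ'` is not paired with `τ'`, then in the
doubly-transposed filtration `σ` is paired with `τ'` and `σ'` is paired with
`τ`; in particular the diagram point `(f σ, f τ)` has multiplicity at least
two there. -/
theorem double_transposition_multiplicity (K : Finset (Finset ℕ))
    (hK : IsComplex K) (pos : Simp K → ℕ) (hpos : IsSimpFiltration K pos)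
    (σ σ' τ τ' : Simp K)
    (hd1 : σ ≠ σ') (hd2 : τ ≠ τ') (hd3 : σ ≠ τ) (hd4 : σ ≠ τ')
    (hd5 : σ' ≠ τ) (hd6 : σ' ≠ τ')
    (hσadj : pos σ' = pos σ + 1 ∨ pos σ = pos σ' + 1)
    (hτadj : pos τ' = pos τ + 1 ∨ pos τ = pos τ' + 1)
    (f : Simp K → ℝ) (hfσ : f σ' = f σ) (hfτ : f τ' = f τ)
    (hpair : PersPair K pos σ τ)
    (hfil₁ : IsSimpFiltration K (swapPos K pos τ τ'))
    (hfil₂ : IsSimpFiltration K (swapPos K pos σ σ'))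
    (hfil₃ : IsSimpFiltration K (swapPos K (swapPos K pos τ τ') σ σ'))
    (ht : PersPair K (swapPos K pos τ τ') σ τ')
    (hs : PersPair K (swapPos K pos σ σ') σ' τ)
    (hnot : ¬ PersPair K (swapPos K (swapPos K pos τ τ') σ σ') σ' τ') :
    PersPair K (swapPos K (swapPos K pos τ τ') σ σ') σ τ' ∧
    PersPair K (swapPos K (swapPos K pos τ τ') σ σ') σ' τ ∧
    2 ≤ Set.ncard {pq : Simp K × Simp K |
      PersPair K (swapPos K (swapPos K pos τ τ') σ σ') pq.1 pq.2 ∧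
      f pq.1 = f σ ∧ f pq.2 = f τ} := by
  classical
  have hp1σ : swapPos K pos τ τ' σ = pos σ := DTM.swapPos_other pos hd3 hd4
  have hp1σ' : swapPos K pos τ τ' σ' = pos σ' := DTM.swapPos_other pos hd5 hd6
  have hp2τ : swapPos K pos σ σ' τ = pos τ := DTM.swapPos_other pos (Ne.symm hd3) (Ne.symm hd5)
  have hp2τ' : swapPos K pos σ σ' τ' = pos τ' := DTM.swapPos_other pos (Ne.symm hd4) (Ne.symm hd6)
  -- first application : transpose σ, σ' starting from swapPos pos τ τ'
  have happ1 : PersPair K (swapPos K (swapPos K pos τ τ') σ σ') σ τ' ∨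
      PersPair K (swapPos K (swapPos K pos τ τ') σ σ') σ' τ' := by
    rcases hσadj with h | h
    · obtain ⟨s', c', hs', hc', hp⟩ := DTM.transposition_update K (swapPos K pos τ τ')
        hfil₁ σ σ' hd1 (by rw [hp1σ, hp1σ']; omega) σ τ' ht
      have hc'' : c' = τ' := by
        rcases hc' with h1 | ⟨h1, -⟩ | ⟨h1, -⟩
        · exact h1
        · exact absurd h1.symm hd4
        · exact absurd h1.symm hd6
      rw [hc''] at hp
      rcases hs' with h1 | ⟨-, h1⟩ | ⟨h1, -⟩
      · rw [h1] at hp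
        exact Or.inl hp
      · rw [h1] at hp
        exact Or.inr hp
      · exact absurd h1 hd1
    · obtain ⟨s', c', hs', hc', hp⟩ := DTM.transposition_update K (swapPos K pos τ τ')
        hfil₁ σ' σ hd1.symm (by rw [hp1σ, hp1σ']; omega) σ τ' ht
      rw [DTM.swapPos_comm (swapPos K pos τ τ') σ' σ] at hp
      have hc'' : c' = τ' := by
        rcases hc' with h1 | ⟨h1, -⟩ | ⟨h1, -⟩
        · exact h1
        · exact absurd h1.symm hd6
        · exact absurd h1.symm hd4
      rw [hc''] at hp
      rcases hs' with h1 | ⟨h1, -⟩ | ⟨-, h1⟩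
      · rw [h1] at hp
        exact Or.inl hp
      · exact absurd h1 hd1
      · rw [h1] at hp
        exact Or.inr hp
  -- second application : transpose τ, τ' starting from swapPos pos σ σ'
  have hswapswap : swapPos K (swapPos K pos σ σ') τ τ' =
      swapPos K (swapPos K pos τ τ') σ σ' :=
    DTM.swapPos_swapPos pos hd3 hd4 hd5 hd6
  have happ2 : PersPair K (swapPos K (swapPos K pos τ τ') σ σ') σ' τ ∨
      PersPair K (swapPos K (swapPos K pos τ τ') σ σ') σ' τ' := by
    rcases hτadj with h | h
    · obtain ⟨s', c', hs', hc', hp⟩ := DTM.transposition_update K (swapPos K pos σ σ')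
        hfil₂ τ τ' hd2 (by rw [hp2τ, hp2τ']; omega) σ' τ hs
      rw [hswapswap] at hp
      have hs'' : s' = σ' := by
        rcases hs' with h1 | ⟨h1, -⟩ | ⟨h1, -⟩
        · exact h1
        · exact absurd h1 hd5
        · exact absurd h1 hd6
      rw [hs''] at hp
      rcases hc' with h1 | ⟨-, h1⟩ | ⟨h1, -⟩
      · rw [h1] at hp
        exact Or.inl hp
      · rw [h1] at hp
        exact Or.inr hp
      · exact absurd h1 hd2
    · obtain ⟨s', c', hs', hc', hp⟩ := DTM.transposition_update K (swapPos K pos σ σ')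
        hfil₂ τ' τ hd2.symm (by rw [hp2τ, hp2τ']; omega) σ' τ hs
      rw [DTM.swapPos_comm (swapPos K pos σ σ') τ' τ, hswapswap] at hp
      have hs'' : s' = σ' := by
        rcases hs' with h1 | ⟨h1, -⟩ | ⟨h1, -⟩
        · exact h1
        · exact absurd h1 hd6
        · exact absurd h1 hd5
      rw [hs''] at hp
      rcases hc' with h1 | ⟨h1, -⟩ | ⟨-, h1⟩
      · rw [h1] at hp
        exact Or.inl hp
      · exact absurd h1 hd2
      · rw [h1] at hp
        exact Or.inr hp
  have h1 : PersPair K (swapPos K (swapPos K pos τ τ') σ σ') σ τ' := happ1.resolve_right hnot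
  have h2 : PersPair K (swapPos K (swapPos K pos τ τ') σ σ') σ' τ := happ2.resolve_right hnot
  refine ⟨h1, h2, ?_⟩
  have hmem1 : ((σ, τ') : Simp K × Simp K) ∈ {pq : Simp K × Simp K |
      PersPair K (swapPos K (swapPos K pos τ τ') σ σ') pq.1 pq.2 ∧
      f pq.1 = f σ ∧ f pq.2 = f τ} := ⟨h1, rfl, hfτ⟩
  have hmem2 : ((σ', τ) : Simp K × Simp K) ∈ {pq : Simp K × Simp K |
      PersPair K (swapPos K (swapPos K pos τ τ') σ σ') pq.1 pq.2 ∧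
      f pq.1 = f σ ∧ f pq.2 = f τ} := ⟨h2, hfσ, rfl⟩
  have hne : ((σ, τ') : Simp K × Simp K) ≠ (σ', τ) := by
    intro h
    exact hd1 (congrArg Prod.fst h)
  have hsub : ({(σ, τ'), (σ', τ)} : Set (Simp K × Simp K)) ⊆ {pq : Simp K × Simp K |
      PersPair K (swapPos K (swapPos K pos τ τ') σ σ') pq.1 pq.2 ∧
      f pq.1 = f σ ∧ f pq.2 = f τ} := by
    rintro p (rfl | rfl)
    · exact hmem1
    · exact hmem2
  calc (2 : ℕ) = ({(σ, τ'), (σ', τ)} : Set (Simp K × Simp K)).ncard :=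
        (Set.ncard_pair hne).symm
    _ ≤ _ := Set.ncard_le_ncard hsub (Set.toFinite _)
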